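/- arXiv:2010.07175 — 2 statements merged into one kernel-verified Lean document; each statement's English description precedes it below -/
import Mathlib

section
/- Let δ be a unit of R = F_{p^m}[v]/⟨v^3 - v⟩ with δ = λ₀η₀ + λ₁η₁ + λ₂η₂, and let σ be the automorphism of R extending Θ ∈ Aut(F_{p^m}). A linear code C = η₀A₀ ⊕ η₁A₁ ⊕ η₂A₂ of length n over R is skew (σ, δ)-constacyclic if and only if each A_i is a skew (Θ, λ_i)-constacyclic code over F_{p^m}, for i = 0, 1, 2. -/
open Polynomial

set_option synthInstance.maxHeartbeats 1000000
set_option maxHeartbeats 1000000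

noncomputable section

/-- The ring `R = F[v]/⟨v^3 - v⟩`. -/
abbrev Rq (F : Type) [Field F] : Type :=
  Polynomial F ⧸ Ideal.span {(X : Polynomial F) ^ 3 - X}

/-- The image of `v` in `R`. -/
def vR (F : Type) [Field F] : Rq F := Ideal.Quotient.mk _ X

/-- The orthogonal idempotents `η₀ = 1 - v²`, `η₁ = ζ(v² + v)`, `η₂ = ζ(v² - v)`
with `ζ = 2⁻¹`. -/
def eta (F : Type) [Field F] : Fin 3 → Rq F :=
  ![1 - vR F ^ 2,
    algebraMap F (Rq F) (2 : F)⁻¹ * (vR F ^ 2 + vR F),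
    algebraMap F (Rq F) (2 : F)⁻¹ * (vR F ^ 2 - vR F)]

/-- A code `C` of length `n` over `S` is skew `(σ, δ)`-constacyclic if it is closed
under the shift `(c₀, …, c_{n-1}) ↦ (σ(δ c_{n-1}), σ(c₀), …, σ(c_{n-2}))`. -/
def IsSkewConstacyclic {S : Type} [CommRing S] {n : ℕ} [NeZero n]
    (σ : RingAut S) (δ : S) (C : Set (Fin n → S)) : Prop :=
  ∀ c ∈ C, (fun i : Fin n => σ ((if i = 0 then δ else 1) * c (i - 1))) ∈ C

variable {F : Type} [Field F]

lemma two_ne_zero_of_card (p m : ℕ) (hp : p.Prime) (hodd : Odd p) (hm : 0 < m)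
    [Fintype F] (hF : Fintype.card F = p ^ m) : (2 : F) ≠ 0 := by
  obtain ⟨k, hr, hcard⟩ := FiniteField.card F (ringChar F)
  have hpr : p = ringChar F := by
    have hdvd : p ∣ ringChar F ^ (k:ℕ) := by
      rw [← hcard, hF]; exact dvd_pow_self p hm.ne'
    exact (Nat.prime_dvd_prime_iff_eq hp hr).mp (hp.dvd_of_dvd_pow hdvd)
  intro h2
  have hdvd2 : p ∣ 2 := by
    rw [hpr]
    exact (CharP.cast_eq_zero_iff F (ringChar F) 2).mp (by exact_mod_cast h2)
  have : p = 2 := (Nat.prime_dvd_prime_iff_eq hp Nat.prime_two).mp hdvd2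
  rcases hodd with ⟨t, ht⟩; omega

lemma vR_cube : (vR F) ^ 3 = vR F := by
  have h : ((X:Polynomial F)^3 - X) ∈ Ideal.span {(X : Polynomial F) ^ 3 - X} :=
    Ideal.subset_span rfl
  have h2 := (Ideal.Quotient.eq_zero_iff_mem
    (I := Ideal.span {(X : Polynomial F) ^ 3 - X})).2 h
  have h3 : vR F ^ 3 - vR F = 0 := by
    unfold vR; rw [← map_pow, ← map_sub]; exact h2
  exact sub_eq_zero.mp h3

def eps (r : F) (hr : r ^ 3 = r) : Rq F →ₐ[F] F :=
  Ideal.Quotient.liftₐ _ (aeval r) (by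
    intro a ha
    rw [Ideal.mem_span_singleton] at ha
    obtain ⟨z, rfl⟩ := ha
    simp [hr])

@[simp] lemma eps_v (r : F) (hr : r ^ 3 = r) : eps r hr (vR F) = r := by
  simp [eps, vR]

@[simp] lemma eps_alg (r : F) (hr : r ^ 3 = r) (a : F) :
    eps r hr (algebraMap F (Rq F) a) = a := AlgHom.commutes _ a

lemma decomp_inj (h2 : (2:F) ≠ 0) (u : Fin 3 → F)
    (h : ∑ j, eta F j * algebraMap F (Rq F) (u j) = 0) : ∀ j, u j = 0 := by
  have hr0 : (0:F)^3 = 0 := by ring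
  have hr1 : (1:F)^3 = 1 := by ring
  have hr2 : (-1:F)^3 = -1 := by ring
  rw [Fin.sum_univ_three] at h
  have e0 := congrArg (eps (0:F) hr0) h
  have e1 := congrArg (eps (1:F) hr1) h
  have e2 := congrArg (eps (-1:F) hr2) h
  simp [_root_.eta, Fin.sum_univ_three] at e0 e1 e2
  intro j
  fin_cases j
  · simpa using e0
  · simpa [h2, (by norm_num : (1:F)+1 = 2)] using e1
  · simpa [h2, (by norm_num : (1:F)+1 = 2)] using e2

lemma eta_mul_delta (α β γ : F) (j : Fin 3) :
    (algebraMap F (Rq F) α + algebraMap F (Rq F) β * vR F +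
      algebraMap F (Rq F) γ * vR F ^ 2) * eta F j
      = eta F j * algebraMap F (Rq F) (![α, α + β + γ, α - β + γ] j) := by
  have hv : (vR F) ^ 3 = vR F := vR_cube
  fin_cases j
  · show _ * (1 - vR F ^ 2) = (1 - vR F ^ 2) * algebraMap F (Rq F) α
    linear_combination (-(algebraMap F (Rq F) β) - algebraMap F (Rq F) γ * vR F) * hv
  · show _ * (algebraMap F (Rq F) (2:F)⁻¹ * (vR F ^ 2 + vR F))
      = (algebraMap F (Rq F) (2:F)⁻¹ * (vR F ^ 2 + vR F)) * algebraMap F (Rq F) (α + β + γ)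
    rw [map_add, map_add]
    linear_combination (algebraMap F (Rq F) (2:F)⁻¹ *
      (algebraMap F (Rq F) β + algebraMap F (Rq F) γ + algebraMap F (Rq F) γ * vR F)) * hv
  · show _ * (algebraMap F (Rq F) (2:F)⁻¹ * (vR F ^ 2 - vR F))
      = (algebraMap F (Rq F) (2:F)⁻¹ * (vR F ^ 2 - vR F)) * algebraMap F (Rq F) (α - β + γ)
    rw [map_add, map_sub]
    linear_combination (algebraMap F (Rq F) (2:F)⁻¹ *
      (algebraMap F (Rq F) β - algebraMap F (Rq F) γ + algebraMap F (Rq F) γ * vR F)) * hv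

lemma sigma_alg (Θ : RingAut F) (σ : RingAut (Rq F))
    (hσ : ∀ a b c : F,
      σ (algebraMap F (Rq F) a + algebraMap F (Rq F) b * vR F +
          algebraMap F (Rq F) c * vR F ^ 2) =
        algebraMap F (Rq F) (Θ a) + algebraMap F (Rq F) (Θ b) * vR F +
          algebraMap F (Rq F) (Θ c) * vR F ^ 2) (a : F) :
    σ (algebraMap F (Rq F) a) = algebraMap F (Rq F) (Θ a) := by
  have h := hσ a 0 0
  simpa using h

lemma sigma_eta (Θ : RingAut F) (σ : RingAut (Rq F))
    (hσ : ∀ a b c : F,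
      σ (algebraMap F (Rq F) a + algebraMap F (Rq F) b * vR F +
          algebraMap F (Rq F) c * vR F ^ 2) =
        algebraMap F (Rq F) (Θ a) + algebraMap F (Rq F) (Θ b) * vR F +
          algebraMap F (Rq F) (Θ c) * vR F ^ 2) (j : Fin 3) :
    σ (eta F j) = eta F j := by
  have hinv : Θ (2:F)⁻¹ = (2:F)⁻¹ := by
    rw [map_inv₀]
    rw [show (2:F) = 1 + 1 by norm_num, map_add, map_one]
  fin_cases j
  · have h0 : eta F 0 = algebraMap F (Rq F) 1 + algebraMap F (Rq F) 0 * vR F +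
        algebraMap F (Rq F) (-1) * vR F ^ 2 := by
      show 1 - vR F ^ 2 = _
      first
      | (simp; ring)
      | simp
    rw [show (eta F ⟨0, by omega⟩ : Rq F) = eta F 0 from rfl, h0, hσ]
    first
      | (simp; ring)
      | simp
  · have h1 : eta F 1 = algebraMap F (Rq F) 0 + algebraMap F (Rq F) (2:F)⁻¹ * vR F +
        algebraMap F (Rq F) (2:F)⁻¹ * vR F ^ 2 := by
      show algebraMap F (Rq F) (2:F)⁻¹ * (vR F ^ 2 + vR F) = _
      first
      | (simp; ring)
      | simp
    rw [show (eta F ⟨1, by omega⟩ : Rq F) = eta F 1 from rfl, h1, hσ, hinv]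
    first
      | (simp; ring)
      | simp
  · have h1 : eta F 2 = algebraMap F (Rq F) 0 + algebraMap F (Rq F) (-(2:F)⁻¹) * vR F +
        algebraMap F (Rq F) (2:F)⁻¹ * vR F ^ 2 := by
      show algebraMap F (Rq F) (2:F)⁻¹ * (vR F ^ 2 - vR F) = _
      first
      | (simp; ring)
      | simp
    rw [show (eta F ⟨2, by omega⟩ : Rq F) = eta F 2 from rfl, h1, hσ, map_neg, hinv]
    first
      | (simp; ring)
      | simp

theorem stmt10 (p m n : ℕ) (hp : p.Prime) (hodd : Odd p) (hm : 0 < m) [NeZero n]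
    (F : Type) [Field F] [Fintype F] (hF : Fintype.card F = p ^ m)
    (Θ : RingAut F) (σ : RingAut (Rq F))
    (hσ : ∀ a b c : F,
      σ (algebraMap F (Rq F) a + algebraMap F (Rq F) b * vR F +
          algebraMap F (Rq F) c * vR F ^ 2) =
        algebraMap F (Rq F) (Θ a) + algebraMap F (Rq F) (Θ b) * vR F +
          algebraMap F (Rq F) (Θ c) * vR F ^ 2)
    (α β γ : F)
    (hδu : IsUnit (algebraMap F (Rq F) α + algebraMap F (Rq F) β * vR F +
        algebraMap F (Rq F) γ * vR F ^ 2))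
    (A : Fin 3 → Submodule F (Fin n → F))
    (C : Submodule (Rq F) (Fin n → Rq F))
    (hC : ∀ c, c ∈ C ↔ ∃ y : Fin 3 → Fin n → F, (∀ i, y i ∈ A i) ∧
        c = fun t => ∑ j, eta F j * algebraMap F (Rq F) (y j t)) :
    IsSkewConstacyclic σ
        (algebraMap F (Rq F) α + algebraMap F (Rq F) β * vR F +
          algebraMap F (Rq F) γ * vR F ^ 2) (C : Set (Fin n → Rq F)) ↔
      ∀ i, IsSkewConstacyclic Θ (![α, α + β + γ, α - β + γ] i)
        (A i : Set (Fin n → F)) := by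
  set φ : F →+* Rq F := algebraMap F (Rq F) with hφ
  set δ : Rq F := φ α + φ β * vR F + φ γ * vR F ^ 2 with hδ
  set lam : Fin 3 → F := ![α, α + β + γ, α - β + γ] with hlam
  have h2 : (2:F) ≠ 0 := two_ne_zero_of_card p m hp hodd hm hF
  have hσφ : ∀ a : F, σ (φ a) = φ (Θ a) := sigma_alg Θ σ hσ
  have hση : ∀ j, σ (eta F j) = eta F j := sigma_eta Θ σ hσ
  have hδη : ∀ j, δ * eta F j = eta F j * φ (lam j) := eta_mul_delta α β γ
  -- the key shift computation
  have hshift : ∀ (y : Fin 3 → Fin n → F) (i : Fin n),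
      σ ((if i = 0 then δ else 1) * ∑ j, eta F j * φ (y j (i - 1)))
        = ∑ j, eta F j * φ (Θ ((if i = 0 then lam j else 1) * y j (i - 1))) := by
    intro y i
    by_cases hi : i = 0
    · simp only [hi, if_true]
      rw [Finset.mul_sum, map_sum]
      refine Finset.sum_congr rfl fun j _ => ?_
      rw [← mul_assoc, hδη j, mul_assoc, ← map_mul, map_mul σ, hση, hσφ]
    · simp only [hi, if_false, one_mul]
      rw [map_sum]
      refine Finset.sum_congr rfl fun j _ => ?_
      rw [map_mul σ, hση, hσφ]
  constructor
  · intro hCc i a ha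
    set y : Fin 3 → Fin n → F := fun j => if j = i then a else 0 with hy
    have hcC : (fun t => ∑ j, eta F j * φ (y j t)) ∈ C := by
      refine (hC _).2 ⟨y, fun j => ?_, rfl⟩
      by_cases hj : j = i
      · subst hj; simpa [hy] using ha
      · simp [hy, hj]
    have hsC := hCc _ hcC
    obtain ⟨z, hz, hez⟩ := (hC _).1 hsC
    have heq : ∀ t j, Θ ((if t = 0 then lam j else 1) * y j (t - 1)) = z j t := by
      intro t
      have ht := congrFun hez t
      rw [hshift y t] at ht
      have hzero : ∑ j, eta F j * φ
          ((Θ ((if t = 0 then lam j else 1) * y j (t - 1))) - z j t) = 0 := by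
        simp only [map_sub, mul_sub, Finset.sum_sub_distrib]
        rw [sub_eq_zero]
        exact ht
      have := decomp_inj h2 _ hzero
      intro j
      have hj := this j
      exact sub_eq_zero.mp hj
    have hfin : (fun t : Fin n => Θ ((if t = 0 then lam i else 1) * a (t - 1))) = z i := by
      funext t
      have := heq t i
      simpa [hy] using this
    rw [hfin]
    exact hz i
  · intro hA c hc
    obtain ⟨y, hy, rfl⟩ := (hC c).1 hc
    refine (hC _).2 ⟨fun j t => Θ ((if t = 0 then lam j else 1) * y j (t - 1)),
      fun j => hA j (y j) (hy j), ?_⟩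
    funext t
    exact hshift y t
end
end

section
/- Let C = η₀A₀ ⊕ η₁A₁ ⊕ η₂A₂ be a skew (σ, δ)-constacyclic code of length n over R = F_{p^m}[v]/⟨v^3 - v⟩ with each λ_i ∈ {1, -1}, where x^n - λ_i = h_i(x)f_i(x) and f_i generates A_i. Then C^⊥ ⊆ C if and only if x^n - λ_i right divides h_i*(x)h_i(x) in F_{p^m}[x;Θ] for all i = 0, 1, 2. -/
open Polynomial

set_option synthInstance.maxHeartbeats 1000000
set_option maxHeartbeats 1000000

noncomputable section

/-- Multiplication in the skew polynomial ring `S[x;σ]`, where polynomials are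
represented as finitely supported coefficient functions `ℕ →₀ S` and
`(a x^i) (b x^j) = a σ^i(b) x^{i+j}`. -/
noncomputable def skewMul {S : Type} [Ring S] (σ : RingAut S) (f g : ℕ →₀ S) : ℕ →₀ S :=
  f.sum fun i a => g.sum fun j b => Finsupp.single (i + j) (a * (σ ^ i) b)

/-- The Euclidean dual of a code, with respect to the standard bilinear form. -/
def dualSet {ι S : Type} [Fintype ι] [CommRing S] (C : Set (ι → S)) : Set (ι → S) :=
  {a | ∀ b ∈ C, ∑ t, a t * b t = 0}

/-- The polynomial (coefficient vector) associated to a codeword. -/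
noncomputable def toPoly {S : Type} [Semiring S] {n : ℕ} (c : Fin n → S) : ℕ →₀ S :=
  ∑ i : Fin n, Finsupp.single (i : ℕ) (c i)

/-- A polynomial is monic: it has a coefficient equal to `1` beyond which all
coefficients vanish. -/
def IsMonicPoly {S : Type} [Semiring S] (g : ℕ →₀ S) : Prop :=
  ∃ d, g d = 1 ∧ ∀ j, d < j → g j = 0

/-- The skew reciprocal polynomial `h*(x) = Σ_{j=0}^k Θ^j(h_{k-j}) x^j` of a
polynomial `h` of degree (at most) `k`. -/
noncomputable def skewRecip {S : Type} [Ring S] (Θ : RingAut S) (k : ℕ) (h : ℕ →₀ S) :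
    ℕ →₀ S :=
  ∑ j ∈ Finset.range (k + 1), Finsupp.single j ((Θ ^ j) (h (k - j)))

namespace SkewAux

variable {F : Type} [Field F] (σ : RingAut F)

lemma skewMul_apply (u v : ℕ →₀ F) (c : ℕ) :
    (skewMul σ u v) c = ∑ i ∈ Finset.range (c + 1), u i * (σ ^ i) (v (c - i)) := by
  classical
  rw [skewMul, Finsupp.sum, Finset.sum_apply']
  have hinner : ∀ i : ℕ, ((v.sum fun j b => Finsupp.single (i + j) (u i * (σ ^ i) b)) c)
      = if i ∈ Finset.range (c + 1) then u i * (σ ^ i) (v (c - i)) else 0 := by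
    intro i
    rw [Finsupp.sum, Finset.sum_apply']
    by_cases hic : i ∈ Finset.range (c + 1)
    · simp only [hic, if_true]
      have : ∀ j ∈ v.support, (Finsupp.single (i + j) (u i * (σ ^ i) (v j))) c
          = if j = c - i then u i * (σ ^ i) (v j) else 0 := by
        intro j _
        rw [Finsupp.single_apply]
        congr 1
        simp only [eq_iff_iff]
        rw [Finset.mem_range] at hic
        constructor <;> omega
      rw [Finset.sum_congr rfl this, Finset.sum_ite_eq' v.support (c - i)
        (fun j => u i * (σ ^ i) (v j))]
      by_cases hv : c - i ∈ v.support
      · simp [hv]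
      · simp only [hv, if_false]
        rw [Finsupp.notMem_support_iff.mp hv, map_zero, mul_zero]
    · simp only [hic, if_false]
      apply Finset.sum_eq_zero
      intro j _
      rw [Finsupp.single_apply, if_neg]
      rw [Finset.mem_range] at hic
      omega
  rw [Finset.sum_congr rfl (fun i _ => hinner i), Finset.sum_ite_mem]
  apply Finset.sum_subset
  · exact Finset.inter_subset_right
  · intro i hi hni
    have : i ∉ u.support := fun hmem => hni (Finset.mem_inter.mpr ⟨hmem, hi⟩)
    rw [Finsupp.notMem_support_iff.mp this, zero_mul]

lemma zero_skewMul (v : ℕ →₀ F) : skewMul σ 0 v = 0 := by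
  rw [skewMul, Finsupp.sum_zero_index]

lemma skewMul_zero (u : ℕ →₀ F) : skewMul σ u 0 = 0 := by
  simp [skewMul, Finsupp.sum_zero_index]

lemma skewMul_ext {u v : ℕ →₀ F} (h : ∀ c, u c = v c) : u = v := Finsupp.ext h

lemma add_skewMul (u u' v : ℕ →₀ F) :
    skewMul σ (u + u') v = skewMul σ u v + skewMul σ u' v := by
  apply Finsupp.ext; intro c
  simp only [skewMul_apply, Finsupp.add_apply, Finsupp.coe_add, Pi.add_apply, add_mul,
    Finset.sum_add_distrib]

lemma skewMul_add (u v v' : ℕ →₀ F) :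
    skewMul σ u (v + v') = skewMul σ u v + skewMul σ u v' := by
  apply Finsupp.ext; intro c
  simp only [skewMul_apply, Finsupp.add_apply, Finsupp.coe_add, Pi.add_apply, map_add,
    mul_add, Finset.sum_add_distrib]

lemma skewMul_neg (u v : ℕ →₀ F) : skewMul σ u (-v) = -skewMul σ u v := by
  apply Finsupp.ext; intro c
  simp only [skewMul_apply, Finsupp.neg_apply, map_neg, mul_neg, Finset.sum_neg_distrib]

lemma neg_skewMul (u v : ℕ →₀ F) : skewMul σ (-u) v = -skewMul σ u v := by
  apply Finsupp.ext; intro c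
  simp only [skewMul_apply, Finsupp.neg_apply, neg_mul, Finset.sum_neg_distrib]

lemma skewMul_sub (u v v' : ℕ →₀ F) :
    skewMul σ u (v - v') = skewMul σ u v - skewMul σ u v' := by
  rw [sub_eq_add_neg, skewMul_add, skewMul_neg, sub_eq_add_neg]

lemma sub_skewMul (u u' v : ℕ →₀ F) :
    skewMul σ (u - u') v = skewMul σ u v - skewMul σ u' v := by
  rw [sub_eq_add_neg, add_skewMul, neg_skewMul, sub_eq_add_neg]

lemma single_skewMul_apply (m : ℕ) (a : F) (v : ℕ →₀ F) (c : ℕ) :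
    (skewMul σ (Finsupp.single m a) v) c
      = if m ≤ c then a * (σ ^ m) (v (c - m)) else 0 := by
  rw [skewMul_apply]
  by_cases hmc : m ≤ c
  · rw [if_pos hmc]
    rw [Finset.sum_eq_single m]
    · rw [Finsupp.single_eq_same]
    · intro i _ hne
      rw [Finsupp.single_apply, if_neg (fun hh => hne hh.symm), zero_mul]
    · intro hm
      exact absurd (Finset.mem_range.mpr (by omega)) hm
  · rw [if_neg hmc]
    apply Finset.sum_eq_zero
    intro i hi
    rw [Finset.mem_range] at hi
    rw [Finsupp.single_apply, if_neg (by omega), zero_mul]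

lemma skewMul_single_one_apply (u : ℕ →₀ F) (n : ℕ) (c : ℕ) :
    (skewMul σ u (Finsupp.single n 1)) c = if n ≤ c then u (c - n) else 0 := by
  rw [skewMul_apply]
  by_cases hnc : n ≤ c
  · rw [if_pos hnc]
    rw [Finset.sum_eq_single (c - n)]
    · rw [show c - (c - n) = n by omega, Finsupp.single_eq_same, map_one, mul_one]
    · intro i hi hne
      rw [Finset.mem_range] at hi
      rw [Finsupp.single_apply, if_neg (by omega), map_zero, mul_zero]
    · intro hm
      exact absurd (Finset.mem_range.mpr (by omega)) hm
  · rw [if_neg hnc]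
    apply Finset.sum_eq_zero
    intro i hi
    rw [Finset.mem_range] at hi
    rw [Finsupp.single_apply, if_neg (by omega), map_zero, mul_zero]

lemma pow_add_apply (i j : ℕ) (b : F) : (σ ^ (i + j)) b = (σ ^ i) ((σ ^ j) b) := by
  rw [pow_add]; rfl

lemma one_skewMul (v : ℕ →₀ F) : skewMul σ (Finsupp.single 0 1) v = v := by
  apply Finsupp.ext; intro c
  rw [single_skewMul_apply, if_pos (Nat.zero_le c)]
  rw [pow_zero, one_mul]
  rfl

lemma skewMul_one (u : ℕ →₀ F) : skewMul σ u (Finsupp.single 0 1) = u := by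
  apply Finsupp.ext; intro c
  rw [skewMul_single_one_apply, if_pos (Nat.zero_le c)]
  simp

lemma skewMul_support_bound {u v : ℕ →₀ F} {du dv : ℕ}
    (hu : ∀ i, du < i → u i = 0) (hv : ∀ j, dv < j → v j = 0) :
    ∀ c, du + dv < c → (skewMul σ u v) c = 0 := by
  intro c hc
  rw [skewMul_apply]
  apply Finset.sum_eq_zero
  intro i hi
  rw [Finset.mem_range] at hi
  by_cases hidu : du < i
  · rw [hu i hidu, zero_mul]
  · rw [hv (c - i) (by omega), map_zero, mul_zero]

lemma skewMul_leading {u v : ℕ →₀ F} {du dv : ℕ}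
    (hu : ∀ i, du < i → u i = 0) (hv : ∀ j, dv < j → v j = 0) :
    (skewMul σ u v) (du + dv) = u du * (σ ^ du) (v dv) := by
  rw [skewMul_apply]
  rw [Finset.sum_eq_single du]
  · rw [show du + dv - du = dv by omega]
  · intro i hi hne
    rw [Finset.mem_range] at hi
    by_cases hidu : du < i
    · rw [hu i hidu, zero_mul]
    · rw [hv (du + dv - i) (by omega), map_zero, mul_zero]
  · intro hm
    exact absurd (Finset.mem_range.mpr (by omega)) hm

lemma skewMul_ne_zero {u v : ℕ →₀ F} (hu : u ≠ 0) (hv : v ≠ 0) :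
    skewMul σ u v ≠ 0 := by
  classical
  have hus : u.support.Nonempty := Finsupp.support_nonempty_iff.mpr hu
  have hvs : v.support.Nonempty := Finsupp.support_nonempty_iff.mpr hv
  set du := u.support.max' hus with hdu
  set dv := v.support.max' hvs with hdv
  have hu' : ∀ i, du < i → u i = 0 := by
    intro i hi
    by_contra hne
    exact absurd (Finset.le_max' _ _ (Finsupp.mem_support_iff.mpr hne)) (by omega)
  have hv' : ∀ j, dv < j → v j = 0 := by
    intro j hj
    by_contra hne
    exact absurd (Finset.le_max' _ _ (Finsupp.mem_support_iff.mpr hne)) (by omega)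
  intro hzero
  have := skewMul_leading σ hu' hv'
  rw [hzero] at this
  have hdu0 : u du ≠ 0 := Finsupp.mem_support_iff.mp (u.support.max'_mem hus)
  have hdv0 : v dv ≠ 0 := Finsupp.mem_support_iff.mp (v.support.max'_mem hvs)
  have : (0 : F) = u du * (σ ^ du) (v dv) := this
  exact (mul_ne_zero hdu0 (fun hz => hdv0 (by
    have := congrArg (σ ^ du).symm hz
    rwa [RingEquiv.symm_apply_apply, map_zero] at this))) this.symm

lemma skewMul_right_cancel {u u' v : ℕ →₀ F} (hv : v ≠ 0)
    (h : skewMul σ u v = skewMul σ u' v) : u = u' := by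
  by_contra hne
  have : u - u' ≠ 0 := fun hz => hne (by
    have := congrArg (· + u') hz
    simpa [sub_add_cancel] using this)
  have := skewMul_ne_zero σ this hv
  rw [sub_skewMul, h, sub_self] at this
  exact this rfl

lemma skewMul_single_single (i j : ℕ) (a b : F) :
    skewMul σ (Finsupp.single i a) (Finsupp.single j b)
      = Finsupp.single (i + j) (a * (σ ^ i) b) := by
  apply Finsupp.ext; intro c
  rw [single_skewMul_apply, Finsupp.single_apply, Finsupp.single_apply]
  by_cases hic : i ≤ c
  · rw [if_pos hic]
    by_cases hj : j = c - i
    · rw [if_pos hj, if_pos (by omega)]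
    · rw [if_neg hj, if_neg (by omega), map_zero, mul_zero]
  · rw [if_neg hic, if_neg (by omega)]

lemma skewMul_assoc_sss (i j : ℕ) (a b : F) (w : ℕ →₀ F) :
    skewMul σ (skewMul σ (Finsupp.single i a) (Finsupp.single j b)) w
      = skewMul σ (Finsupp.single i a) (skewMul σ (Finsupp.single j b) w) := by
  induction w using Finsupp.induction with
  | zero => simp [skewMul_zero]
  | single_add l cc w _ _ ihw =>
    simp only [skewMul_add]
    rw [ihw]
    congr 1
    rw [skewMul_single_single, skewMul_single_single, skewMul_single_single,
      skewMul_single_single]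
    congr 1
    · omega
    · rw [map_mul, pow_add_apply, mul_assoc]

lemma skewMul_assoc_sv (i : ℕ) (a : F) (v w : ℕ →₀ F) :
    skewMul σ (skewMul σ (Finsupp.single i a) v) w
      = skewMul σ (Finsupp.single i a) (skewMul σ v w) := by
  induction v using Finsupp.induction with
  | zero => simp [skewMul_zero, zero_skewMul]
  | single_add j b v _ _ ihv =>
    simp only [skewMul_add, add_skewMul]
    rw [ihv, skewMul_assoc_sss]

lemma skewMul_assoc (u v w : ℕ →₀ F) :
    skewMul σ (skewMul σ u v) w = skewMul σ u (skewMul σ v w) := by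
  induction u using Finsupp.induction with
  | zero => simp [zero_skewMul]
  | single_add i a u _ _ ih =>
    simp only [add_skewMul]
    rw [ih, skewMul_assoc_sv]


lemma toPoly_apply {n : ℕ} (c : Fin n → F) (t : ℕ) :
    toPoly c t = if h : t < n then c ⟨t, h⟩ else 0 := by
  classical
  rw [toPoly, Finset.sum_apply']
  by_cases h : t < n
  · rw [dif_pos h]
    rw [Finset.sum_eq_single (⟨t, h⟩ : Fin n)]
    · rw [Finsupp.single_apply, if_pos rfl]
    · intro i _ hne
      rw [Finsupp.single_apply, if_neg]
      intro heq
      exact hne (Fin.ext heq)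
    · intro hmem
      exact absurd (Finset.mem_univ _) hmem
  · rw [dif_neg h]
    apply Finset.sum_eq_zero
    intro i _
    rw [Finsupp.single_apply, if_neg (by omega)]

lemma toPoly_coe {n : ℕ} (w : ℕ →₀ F) (hw : ∀ j, n ≤ j → w j = 0) :
    toPoly (fun t : Fin n => w t) = w := by
  apply Finsupp.ext; intro t
  rw [toPoly_apply]
  by_cases h : t < n
  · rw [dif_pos h]
  · rw [dif_neg h, hw t (by omega)]

lemma toPoly_zero {n : ℕ} : toPoly (0 : Fin n → F) = 0 := by
  apply Finsupp.ext; intro t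
  rw [toPoly_apply]
  split <;> simp

lemma skewRecip_apply (k : ℕ) (h : ℕ →₀ F) (u : ℕ) :
    skewRecip σ k h u = if u ≤ k then (σ ^ u) (h (k - u)) else 0 := by
  classical
  rw [skewRecip, Finset.sum_apply']
  by_cases huk : u ≤ k
  · rw [if_pos huk]
    rw [Finset.sum_eq_single u]
    · rw [Finsupp.single_apply, if_pos rfl]
    · intro j _ hne
      rw [Finsupp.single_apply, if_neg hne]
    · intro hmem
      exact absurd (Finset.mem_range.mpr (by omega)) hmem
  · rw [if_neg huk]
    apply Finset.sum_eq_zero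
    intro j hj
    rw [Finset.mem_range] at hj
    rw [Finsupp.single_apply, if_neg (by omega)]

lemma sum_skewMul {s : Finset ℕ} (g : ℕ → (ℕ →₀ F)) (v : ℕ →₀ F) :
    skewMul σ (∑ j ∈ s, g j) v = ∑ j ∈ s, skewMul σ (g j) v := by
  classical
  induction s using Finset.induction with
  | empty => simp [zero_skewMul]
  | insert _ _ hni ih =>
    rw [Finset.sum_insert hni, Finset.sum_insert hni, add_skewMul, ih]

lemma finsupp_decomp (q : ℕ →₀ F) (d : ℕ) (hq : ∀ j, d ≤ j → q j = 0) :
    q = ∑ j ∈ Finset.range d, Finsupp.single j (q j) := by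
  apply Finsupp.ext; intro t
  rw [Finset.sum_apply']
  by_cases ht : t < d
  · rw [Finset.sum_eq_single t]
    · rw [Finsupp.single_apply, if_pos rfl]
    · intro j _ hne
      rw [Finsupp.single_apply, if_neg hne]
    · intro hmem
      exact absurd (Finset.mem_range.mpr ht) hmem
  · rw [hq t (by omega)]
    symm
    apply Finset.sum_eq_zero
    intro j hj
    rw [Finset.mem_range] at hj
    rw [Finsupp.single_apply, if_neg (by omega)]

lemma pow_fix {lam : F} (hlam : lam = 1 ∨ lam = -1) (i : ℕ) : (σ ^ i) lam = lam := by
  rcases hlam with h | h <;> subst h <;> simp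


lemma skewMul_single_apply_right (u : ℕ →₀ F) (m : ℕ) (b : F) (c : ℕ) :
    (skewMul σ u (Finsupp.single m b)) c
      = if m ≤ c then u (c - m) * (σ ^ (c - m)) b else 0 := by
  rw [skewMul_apply]
  by_cases hmc : m ≤ c
  · rw [if_pos hmc]
    rw [Finset.sum_eq_single (c - m)]
    · rw [show c - (c - m) = m by omega, Finsupp.single_eq_same]
    · intro i hi hne
      rw [Finset.mem_range] at hi
      rw [Finsupp.single_apply, if_neg (by omega), map_zero, mul_zero]
    · intro hm
      exact absurd (Finset.mem_range.mpr (by omega)) hm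
  · rw [if_neg hmc]
    apply Finset.sum_eq_zero
    intro i hi
    rw [Finset.mem_range] at hi
    rw [Finsupp.single_apply, if_neg (by omega), map_zero, mul_zero]

lemma E_apply (n : ℕ) (hn : n ≠ 0) (lam : F) (c : ℕ) :
    (Finsupp.single n 1 - Finsupp.single 0 lam : ℕ →₀ F) c
      = if c = n then 1 else if c = 0 then -lam else 0 := by
  rw [Finsupp.sub_apply, Finsupp.single_apply, Finsupp.single_apply]
  by_cases hcn : c = n
  · rw [if_pos hcn.symm, if_pos hcn, if_neg (by omega), sub_zero]
  · rw [if_neg (fun hh : n = c => hcn hh.symm), if_neg hcn]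
    by_cases hc0 : c = 0
    · rw [if_pos hc0.symm, if_pos hc0, zero_sub]
    · rw [if_neg (fun hh : 0 = c => hc0 hh.symm), if_neg hc0, sub_zero]

section Component

variable {n : ℕ} {lam : F} {f h : ℕ →₀ F} {d : ℕ}

lemma sigma_pow_ne_zero {i : ℕ} {x : F} (hx : x ≠ 0) : (σ ^ i) x ≠ 0 := by
  intro hz
  apply hx
  have := congrArg ((σ ^ i).symm) hz
  rwa [RingEquiv.symm_apply_apply, map_zero] at this

lemma facts (hn : n ≠ 0) (hlam : lam = 1 ∨ lam = -1)
    (hd1 : f d = 1) (hd0 : ∀ j, d < j → f j = 0)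
    (hdiv : skewMul σ h f = Finsupp.single n 1 - Finsupp.single 0 lam) :
    ∃ e, d + e = n ∧ h e = 1 ∧ (∀ j, e < j → h j = 0) ∧ f 0 ≠ 0 ∧ h 0 * f 0 = -lam := by
  classical
  have hlam0 : lam ≠ 0 := by
    rcases hlam with h1 | h1 <;> subst h1
    · exact one_ne_zero
    · exact neg_ne_zero.mpr one_ne_zero
  have hEn : (Finsupp.single n 1 - Finsupp.single 0 lam : ℕ →₀ F) n = 1 := by
    rw [E_apply n hn, if_pos rfl]
  have hE0 : (Finsupp.single n 1 - Finsupp.single 0 lam : ℕ →₀ F) 0 = -lam := by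
    rw [E_apply n hn, if_neg (by omega), if_pos rfl]
  have hhne : h ≠ 0 := by
    intro h0
    rw [h0, zero_skewMul] at hdiv
    have := congrArg (fun w : ℕ →₀ F => w n) hdiv
    simp only [Finsupp.coe_zero, Pi.zero_apply] at this
    rw [hEn] at this
    exact one_ne_zero this.symm
  have hs : h.support.Nonempty := Finsupp.support_nonempty_iff.mpr hhne
  set eh := h.support.max' hs with heh
  have he0 : ∀ j, eh < j → h j = 0 := by
    intro j hj
    by_contra hne
    exact absurd (Finset.le_max' _ _ (Finsupp.mem_support_iff.mpr hne)) (by omega)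
  have heh_ne : h eh ≠ 0 := Finsupp.mem_support_iff.mp (h.support.max'_mem hs)
  have hlead : (skewMul σ h f) (eh + d) = h eh := by
    rw [skewMul_leading σ he0 hd0, hd1, map_one, mul_one]
  rw [hdiv] at hlead
  have hcases : eh + d = n := by
    by_contra hne
    rw [E_apply n hn, if_neg hne] at hlead
    by_cases hc0 : eh + d = 0
    · -- then eh = 0 and d = 0; contradiction with coefficient at n
      have hb : ∀ c, 0 + 0 < c → (skewMul σ h f) c = 0 :=
        skewMul_support_bound σ (fun i hi => he0 i (by omega)) (fun j hj => hd0 j (by omega))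
      have := hb n (by omega)
      rw [hdiv, hEn] at this
      exact one_ne_zero this
    · rw [if_neg hc0] at hlead
      exact heh_ne hlead.symm
  have hhe1 : h eh = 1 := by
    rw [E_apply n hn, if_pos hcases] at hlead
    exact hlead.symm
  have h00 : h 0 * f 0 = -lam := by
    have := congrArg (fun w : ℕ →₀ F => w 0) hdiv
    rw [skewMul_apply, Finset.sum_range_one] at this
    rw [hE0] at this
    simpa using this
  refine ⟨eh, by omega, hhe1, he0, ?_, h00⟩
  intro hf0
  rw [hf0, mul_zero] at h00
  exact hlam0 (neg_eq_zero.mp h00.symm)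

lemma C1 (hn : n ≠ 0) (hlam : lam = 1 ∨ lam = -1) {e : ℕ}
    (hd1 : f d = 1) (hd0 : ∀ j, d < j → f j = 0)
    (hde : d + e = n) (he1 : h e = 1) (he0 : ∀ j, e < j → h j = 0) (hf0 : f 0 ≠ 0)
    (hdiv : skewMul σ h f = Finsupp.single n 1 - Finsupp.single 0 lam) :
    skewMul σ f h = Finsupp.single n 1 - Finsupp.single 0 lam := by
  classical
  set E : ℕ →₀ F := Finsupp.single n 1 - Finsupp.single 0 lam with hE
  set w : ℕ →₀ F := skewMul σ f h - E with hw
  -- w vanishes at degrees ≥ n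
  have hwhigh : ∀ c, n ≤ c → w c = 0 := by
    intro c hc
    rw [hw, Finsupp.sub_apply]
    by_cases hcn : c = n
    · have hl : (skewMul σ f h) (d + e) = f d * (σ ^ d) (h e) := skewMul_leading σ hd0 he0
      rw [hde] at hl
      rw [hcn, hl, hd1, he1, map_one, one_mul, hE, E_apply n hn, if_pos rfl, sub_self]
    · have h1 : (skewMul σ f h) c = 0 := by
        apply skewMul_support_bound σ hd0 he0
        omega
      rw [h1, hE, E_apply n hn, if_neg hcn, if_neg (by omega), sub_self]
  -- (w * f) c = 0 for c < n
  have hwf : ∀ c, c < n → (skewMul σ w f) c = 0 := by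
    intro c hc
    have hassoc : skewMul σ (skewMul σ f h) f = skewMul σ f E := by
      rw [skewMul_assoc, hdiv]
    have : skewMul σ w f = skewMul σ f E - skewMul σ E f := by
      rw [hw, sub_skewMul, hassoc]
    rw [this, Finsupp.sub_apply]
    have hfE : (skewMul σ f E) c = -(lam * f c) := by
      rw [hE, skewMul_sub, Finsupp.sub_apply]
      rw [skewMul_single_one_apply, if_neg (by omega)]
      rw [skewMul_single_apply_right, if_pos (Nat.zero_le c)]
      rw [Nat.sub_zero, pow_fix σ hlam, zero_sub, mul_comm]
    have hEf : (skewMul σ E f) c = -(lam * f c) := by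
      rw [hE, sub_skewMul, Finsupp.sub_apply]
      rw [single_skewMul_apply, if_neg (by omega)]
      rw [single_skewMul_apply, if_pos (Nat.zero_le c)]
      rw [Nat.sub_zero, pow_zero, zero_sub]
      rfl
    rw [hfE, hEf, sub_self]
  -- conclude w = 0
  have hw0 : w = 0 := by
    by_contra hne
    have hs : w.support.Nonempty := Finsupp.support_nonempty_iff.mpr hne
    set t0 := w.support.min' hs with ht0
    have hlow : ∀ i, i < t0 → w i = 0 := by
      intro i hi
      by_contra hnz
      exact absurd (Finset.min'_le _ _ (Finsupp.mem_support_iff.mpr hnz)) (by omega)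
    have ht0ne : w t0 ≠ 0 := Finsupp.mem_support_iff.mp (w.support.min'_mem hs)
    have ht0n : t0 < n := by
      by_contra hge
      exact ht0ne (hwhigh t0 (by omega))
    have : (skewMul σ w f) t0 = w t0 * (σ ^ t0) (f 0) := by
      rw [skewMul_apply, Finset.sum_eq_single t0]
      · rw [Nat.sub_self]
      · intro i hi hne'
        rw [Finset.mem_range] at hi
        rw [hlow i (by omega), zero_mul]
      · intro hm
        exact absurd (Finset.mem_range.mpr (by omega)) hm
    rw [hwf t0 ht0n] at this
    exact (mul_ne_zero ht0ne (sigma_pow_ne_zero σ hf0)) this.symm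
  have := congrArg (fun z => z + E) hw0
  simpa [hw] using this

lemma hhat_facts {e : ℕ} (he1 : h e = 1) :
    (skewRecip σ e h) 0 = 1 ∧ (∀ u, e < u → (skewRecip σ e h) u = 0) := by
  constructor
  · rw [skewRecip_apply, if_pos (Nat.zero_le e), Nat.sub_zero, pow_zero, he1]
    rfl
  · intro u hu
    rw [skewRecip_apply, if_neg (by omega)]

lemma SHIFT {e k : ℕ} (hek : e ≤ k) (hk : ∀ j, k < j → h j = 0)
    (he0 : ∀ j, e < j → h j = 0) :
    skewRecip σ k h = skewMul σ (Finsupp.single (k - e) 1) (skewRecip σ e h) := by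
  apply Finsupp.ext; intro j
  rw [single_skewMul_apply, skewRecip_apply]
  by_cases h1 : k - e ≤ j
  · rw [if_pos h1, skewRecip_apply, one_mul]
    by_cases h2 : j ≤ k
    · rw [if_pos h2, if_pos (by omega), ← pow_add_apply,
        show k - e + (j - (k - e)) = j by omega]
      congr 2
      omega
    · rw [if_neg h2, if_neg (by omega), map_zero]
  · rw [if_neg h1, if_pos (by omega), he0 (k - j) (by omega), map_zero]

lemma LCANCEL {u v : ℕ →₀ F}
    (hc : skewMul σ (Finsupp.single 1 1) u = skewMul σ (Finsupp.single 1 1) v) : u = v := by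
  apply Finsupp.ext; intro c
  have := congrArg (fun w : ℕ →₀ F => w (c + 1)) hc
  rw [single_skewMul_apply, single_skewMul_apply, if_pos (by omega), if_pos (by omega),
    one_mul, one_mul, pow_one] at this
  have h2 := congrArg σ.symm this
  simpa using h2

lemma XCANCEL (hn : n ≠ 0) (hlam : lam = 1 ∨ lam = -1) :
    ∀ (m : ℕ) (w q : ℕ →₀ F),
      skewMul σ q (Finsupp.single n 1 - Finsupp.single 0 lam)
        = skewMul σ (Finsupp.single m 1) w →
      ∃ q2, w = skewMul σ q2 (Finsupp.single n 1 - Finsupp.single 0 lam) := by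
  classical
  have hlam0 : lam ≠ 0 := by
    rcases hlam with h1 | h1 <;> subst h1
    · exact one_ne_zero
    · exact neg_ne_zero.mpr one_ne_zero
  intro m
  induction m with
  | zero =>
    intro w q hq
    rw [one_skewMul] at hq
    exact ⟨q, hq.symm⟩
  | succ m ih =>
    intro w q hq
    have hq0 : q 0 = 0 := by
      have := congrArg (fun z : ℕ →₀ F => z 0) hq
      rw [single_skewMul_apply, if_neg (by omega)] at this
      rw [skewMul_apply, Finset.sum_range_one, pow_zero] at this
      rw [E_apply n hn, if_neg (by omega), if_pos rfl] at this
      have h3 : q 0 * -lam = 0 := this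
      have h4 : q 0 * lam = 0 := by
        have := congrArg Neg.neg h3
        simpa using this
      exact (mul_eq_zero.mp h4).resolve_right hlam0
    set q1 : ℕ →₀ F := Finsupp.onFinset (q.support.image (· - 1))
      (fun j => σ.symm (q (j + 1)))
      (by
        intro j hj
        have hj' : σ.symm (q (j + 1)) ≠ 0 := hj
        have hne : q (j + 1) ≠ 0 := fun hz => hj' (by rw [hz, map_zero])
        exact Finset.mem_image.mpr ⟨j + 1, Finsupp.mem_support_iff.mpr hne, rfl⟩) with hq1
    have hqeq : q = skewMul σ (Finsupp.single 1 1) q1 := by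
      apply Finsupp.ext; intro c
      rw [single_skewMul_apply]
      cases c with
      | zero => rw [if_neg (by omega), hq0]
      | succ c =>
        rw [if_pos (by omega), one_mul, pow_one]
        show q (c + 1) = σ (q1 c)
        rw [hq1]
        simp only [Finsupp.onFinset_apply]
        rw [RingEquiv.apply_symm_apply]
    have hsingle : (Finsupp.single (m + 1) 1 : ℕ →₀ F)
        = skewMul σ (Finsupp.single 1 1) (Finsupp.single m 1) := by
      rw [skewMul_single_single, map_one, mul_one]
      congr 1
      omega
    rw [hqeq, skewMul_assoc, hsingle, skewMul_assoc] at hq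
    have hcan := LCANCEL σ hq
    exact ih w q1 hcan

lemma INNER (hn : n ≠ 0) {e i j : ℕ} (hi : i < e) (hj : j < d)
    (hde : d + e = n) (he0 : ∀ u, e < u → h u = 0)
    (hC1 : skewMul σ f h = Finsupp.single n 1 - Finsupp.single 0 lam) :
    ∑ t : Fin n, (skewMul σ (Finsupp.single j 1) (skewRecip σ e h)) ↑t
      * (skewMul σ (Finsupp.single i 1) f) ↑t = 0 := by
  classical
  set hhat := skewRecip σ e h with hhat_def
  set g : ℕ → F := fun t => (skewMul σ (Finsupp.single j 1) hhat) t
    * (skewMul σ (Finsupp.single i 1) f) t with hg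
  set c := (e - i) + j with hc
  have hc1 : 1 ≤ c := by omega
  have hcn : c < n := by omega
  have hc2 : c + 1 ≤ n - i := by omega
  have hstep : ∑ t : Fin n, (skewMul σ (Finsupp.single j 1) hhat) ↑t
      * (skewMul σ (Finsupp.single i 1) f) ↑t = ∑ t ∈ Finset.range n, g t :=
    Fin.sum_univ_eq_sum_range g n
  rw [hstep]
  have hzero_lt : ∀ t, t < i → g t = 0 := by
    intro t ht
    simp only [hg]
    rw [single_skewMul_apply σ i 1 f t, if_neg (by omega), mul_zero]
  have hsplit : ∑ t ∈ Finset.range n, g t = ∑ s ∈ Finset.range (n - i), g (i + s) := by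
    rw [Finset.range_eq_Ico,
      ← Finset.sum_Ico_consecutive g (Nat.zero_le i) (by omega : i ≤ n)]
    have h1 : ∑ t ∈ Finset.Ico 0 i, g t = 0 := by
      apply Finset.sum_eq_zero
      intro t ht
      rw [Finset.mem_Ico] at ht
      exact hzero_lt t ht.2
    rw [h1, zero_add, Finset.sum_Ico_eq_sum_range, Finset.range_eq_Ico]
  rw [hsplit]
  have hterm : ∀ s, g (i + s)
      = if s ≤ c then (σ ^ i) (f s * (σ ^ s) (h (c - s))) else 0 := by
    intro s
    simp only [hg]
    rw [single_skewMul_apply σ i 1 f (i + s), if_pos (by omega), one_mul,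
      show i + s - i = s by omega]
    rw [single_skewMul_apply σ j 1 hhat (i + s)]
    by_cases hs : s ≤ c
    · rw [if_pos hs]
      by_cases hjs : j ≤ i + s
      · have hu : i + s - j ≤ e := by omega
        rw [if_pos hjs, one_mul, hhat_def, skewRecip_apply, if_pos hu,
          ← pow_add_apply, show j + (i + s - j) = i + s by omega,
          show e - (i + s - j) = c - s by omega]
        rw [map_mul, ← pow_add_apply, mul_comm]
      · rw [if_neg hjs]
        rw [he0 (c - s) (by omega), map_zero, mul_zero, map_zero, zero_mul]
    · rw [if_neg hs]
      by_cases hjs : j ≤ i + s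
      · rw [if_pos hjs, one_mul, hhat_def, skewRecip_apply, if_neg (by omega),
          map_zero, zero_mul]
      · rw [if_neg hjs, zero_mul]
  rw [Finset.sum_congr rfl (fun s _ => hterm s)]
  have hconv : ∀ s : ℕ, (if s ≤ c then (σ ^ i) (f s * (σ ^ s) (h (c - s))) else 0)
      = if s ∈ Finset.range (c + 1) then (σ ^ i) (f s * (σ ^ s) (h (c - s))) else 0 := by
    intro s
    congr 1
    simp [Nat.lt_succ_iff]
  rw [Finset.sum_congr rfl (fun s _ => hconv s), Finset.sum_ite_mem]
  have hinter : Finset.range (n - i) ∩ Finset.range (c + 1) = Finset.range (c + 1) :=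
    Finset.inter_eq_right.mpr (Finset.range_subset_range.mpr hc2)
  rw [hinter, ← map_sum]
  have : ∑ s ∈ Finset.range (c + 1), f s * (σ ^ s) (h (c - s)) = (skewMul σ f h) c :=
    (skewMul_apply σ f h c).symm
  rw [this, hC1, E_apply n hn, if_neg (by omega), if_neg (by omega), map_zero]

lemma EXPAND (w v : ℕ →₀ F) (D : ℕ) (hw : ∀ j, D ≤ j → w j = 0) (t : ℕ) :
    (skewMul σ w v) t
      = ∑ j ∈ Finset.range D, w j * (skewMul σ (Finsupp.single j 1) v) t := by
  conv_lhs => rw [finsupp_decomp w D hw]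
  rw [sum_skewMul, Finset.sum_apply']
  apply Finset.sum_congr rfl
  intro j _
  rw [single_skewMul_apply, single_skewMul_apply]
  by_cases hjt : j ≤ t
  · rw [if_pos hjt, if_pos hjt, one_mul]
  · rw [if_neg hjt, if_neg hjt, mul_zero]

lemma QBOUND (hn : n ≠ 0) {e : ℕ} (hde : d + e = n)
    (hd1 : f d = 1) (hd0 : ∀ j, d < j → f j = 0)
    (q : ℕ →₀ F) (hhigh : ∀ c, n ≤ c → (skewMul σ q f) c = 0) :
    ∀ u, e ≤ u → q u = 0 := by
  classical
  by_contra hne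
  push_neg at hne
  obtain ⟨u, hue, hqu⟩ := hne
  have hs : q.support.Nonempty := ⟨u, Finsupp.mem_support_iff.mpr hqu⟩
  set J := q.support.max' hs with hJ
  have hJ0 : ∀ i, J < i → q i = 0 := by
    intro i hi
    by_contra hnz
    exact absurd (Finset.le_max' _ _ (Finsupp.mem_support_iff.mpr hnz)) (by omega)
  have hJu : u ≤ J := Finset.le_max' _ _ (Finsupp.mem_support_iff.mpr hqu)
  have hJne : q J ≠ 0 := Finsupp.mem_support_iff.mp (q.support.max'_mem hs)
  have hlead : (skewMul σ q f) (J + d) = q J := by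
    rw [skewMul_leading σ hJ0 hd0, hd1, map_one, mul_one]
  rw [hhigh (J + d) (by omega)] at hlead
  exact hJne hlead.symm

lemma ORTH (hn : n ≠ 0) {e : ℕ} (hde : d + e = n)
    (hd1 : f d = 1) (hd0 : ∀ j, d < j → f j = 0) (he0 : ∀ u, e < u → h u = 0)
    (hC1 : skewMul σ f h = Finsupp.single n 1 - Finsupp.single 0 lam)
    (S : Set (Fin n → F)) (hS : ∀ c : Fin n → F, c ∈ S ↔ ∃ q, toPoly c = skewMul σ q f)
    (q' : ℕ →₀ F) (hq' : ∀ j, d ≤ j → q' j = 0)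
    (b : Fin n → F) (hb : b ∈ S) :
    ∑ t : Fin n, (skewMul σ q' (skewRecip σ e h)) ↑t * b t = 0 := by
  classical
  obtain ⟨q, hq⟩ := (hS b).mp hb
  have hhigh : ∀ c, n ≤ c → (skewMul σ q f) c = 0 := by
    intro c hc
    rw [← hq, toPoly_apply, dif_neg (by omega)]
  have hqe : ∀ u, e ≤ u → q u = 0 := QBOUND σ hn hde hd1 hd0 q hhigh
  have hbt : ∀ t : Fin n, b t = (skewMul σ q f) ↑t := by
    intro t
    rw [← hq, toPoly_apply, dif_pos t.isLt]
  calc ∑ t : Fin n, (skewMul σ q' (skewRecip σ e h)) ↑t * b t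
      = ∑ t : Fin n,
          (∑ j ∈ Finset.range d, q' j * (skewMul σ (Finsupp.single j 1) (skewRecip σ e h)) ↑t)
          * (∑ i ∈ Finset.range e, q i * (skewMul σ (Finsupp.single i 1) f) ↑t) := by
        apply Finset.sum_congr rfl
        intro t _
        rw [hbt t, EXPAND σ q' (skewRecip σ e h) d hq', EXPAND σ q f e hqe]
    _ = ∑ t : Fin n, ∑ j ∈ Finset.range d, ∑ i ∈ Finset.range e,
          (q' j * (skewMul σ (Finsupp.single j 1) (skewRecip σ e h)) ↑t)
          * (q i * (skewMul σ (Finsupp.single i 1) f) ↑t) := by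
        apply Finset.sum_congr rfl
        intro t _
        rw [Finset.sum_mul_sum]
    _ = ∑ j ∈ Finset.range d, ∑ i ∈ Finset.range e, (q' j * q i) *
          ∑ t : Fin n, (skewMul σ (Finsupp.single j 1) (skewRecip σ e h)) ↑t
            * (skewMul σ (Finsupp.single i 1) f) ↑t := by
        rw [Finset.sum_comm]
        apply Finset.sum_congr rfl
        intro j _
        rw [Finset.sum_comm]
        apply Finset.sum_congr rfl
        intro i _
        rw [Finset.mul_sum]
        apply Finset.sum_congr rfl
        intro t _
        ring
    _ = 0 := by
        apply Finset.sum_eq_zero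
        intro j hj
        apply Finset.sum_eq_zero
        intro i hi
        rw [Finset.mem_range] at hj hi
        rw [INNER σ hn hi hj hde he0 hC1, mul_zero]


end Component

def recAux (σ : RingAut F) (hh : ℕ →₀ F) (a : ℕ → F) : ℕ → ℕ → F
  | 0 => fun _ => 0
  | (N+1) => fun t => if t = N then
      a N - ∑ j ∈ Finset.range N, recAux σ hh a N j * (σ ^ j) (hh (N - j))
    else recAux σ hh a N t

def recQ (σ : RingAut F) (hh : ℕ →₀ F) (a : ℕ → F) (t : ℕ) : F :=
  recAux σ hh a (t + 1) t

lemma recAux_stable (hh : ℕ →₀ F) (a : ℕ → F) :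
    ∀ N t, t < N → recAux σ hh a N t = recQ σ hh a t := by
  intro N
  induction N with
  | zero => intro t ht; omega
  | succ N ih =>
    intro t ht
    by_cases htN : t = N
    · subst htN; rfl
    · have h2 : recAux σ hh a (N + 1) t = recAux σ hh a N t := by
        show (if t = N then _ else recAux σ hh a N t) = recAux σ hh a N t
        rw [if_neg htN]
      rw [h2]
      exact ih t (by omega)

lemma recQ_eq (hh : ℕ →₀ F) (a : ℕ → F) (t : ℕ) :
    recQ σ hh a t = a t - ∑ j ∈ Finset.range t, recQ σ hh a j * (σ ^ j) (hh (t - j)) := by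
  show recAux σ hh a (t + 1) t = _
  have h1 : recAux σ hh a (t + 1) t
      = a t - ∑ j ∈ Finset.range t, recAux σ hh a t j * (σ ^ j) (hh (t - j)) := by
    show (if t = t then _ else _) = _
    rw [if_pos rfl]
  rw [h1]
  congr 1
  apply Finset.sum_congr rfl
  intro j hj
  rw [Finset.mem_range] at hj
  rw [recAux_stable σ hh a t j hj]

section Component2

variable {n : ℕ} {lam : F} {f h : ℕ →₀ F} {d : ℕ}

lemma UNIQ {e : ℕ} (hde : d + e = n) (hd1 : f d = 1) (hd0 : ∀ j, d < j → f j = 0)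
    (a a' : Fin n → F)
    (ha : ∀ i, i < e → ∑ t : Fin n, a t * (skewMul σ (Finsupp.single i 1) f) ↑t = 0)
    (ha' : ∀ i, i < e → ∑ t : Fin n, a' t * (skewMul σ (Finsupp.single i 1) f) ↑t = 0)
    (hagree : ∀ t : Fin n, (t : ℕ) < d → a t = a' t) : a = a' := by
  classical
  have H : ∀ N, ∀ t : Fin n, (t : ℕ) ≤ N → a t = a' t := by
    intro N
    induction N using Nat.strong_induction_on with
    | _ N ih =>
      intro t htN
      by_cases htd : (t : ℕ) < d
      · exact hagree t htd
      · have hie : (t : ℕ) - d < e := by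
          have := t.isLt
          omega
        have h1 := ha ((t : ℕ) - d) hie
        have h2 := ha' ((t : ℕ) - d) hie
        have hsub : ∑ t'' : Fin n,
            (a t'' - a' t'') * (skewMul σ (Finsupp.single ((t : ℕ) - d) 1) f) ↑t'' = 0 := by
          have : ∀ t'' : Fin n,
              (a t'' - a' t'') * (skewMul σ (Finsupp.single ((t : ℕ) - d) 1) f) ↑t''
              = a t'' * (skewMul σ (Finsupp.single ((t : ℕ) - d) 1) f) ↑t''
                - a' t'' * (skewMul σ (Finsupp.single ((t : ℕ) - d) 1) f) ↑t'' := by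
            intro t''; ring
          rw [Finset.sum_congr rfl (fun t'' _ => this t''), Finset.sum_sub_distrib, h1, h2,
            sub_zero]
        rw [Finset.sum_eq_single t] at hsub
        · have hcoef : (skewMul σ (Finsupp.single ((t : ℕ) - d) 1) f) ↑t = 1 := by
            rw [single_skewMul_apply, if_pos (by omega), one_mul,
              show (t : ℕ) - ((t : ℕ) - d) = d by omega, hd1, map_one]
          rw [hcoef, mul_one, sub_eq_zero] at hsub
          exact hsub
        · intro t'' _ hne
          have hvne : (t'' : ℕ) ≠ (t : ℕ) := fun hh => hne (Fin.ext hh)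
          by_cases hlt : (t'' : ℕ) < (t : ℕ)
          · rw [ih (t'' : ℕ) (by omega) t'' (le_refl _), sub_self, zero_mul]
          · rw [single_skewMul_apply]
            by_cases hile : (t : ℕ) - d ≤ (t'' : ℕ)
            · rw [if_pos hile, one_mul, hd0 ((t'' : ℕ) - ((t : ℕ) - d)) (by omega),
                map_zero, mul_zero]
            · rw [if_neg hile, mul_zero]
        · intro hmem
          exact absurd (Finset.mem_univ t) hmem
  funext t
  exact H n t (le_of_lt t.isLt)

lemma RECON (hn : n ≠ 0) {e : ℕ} (hde : d + e = n)
    (hd1 : f d = 1) (hd0 : ∀ j, d < j → f j = 0)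
    (he1 : h e = 1) (he0 : ∀ u, e < u → h u = 0)
    (hC1 : skewMul σ f h = Finsupp.single n 1 - Finsupp.single 0 lam)
    (S : Set (Fin n → F)) (hS : ∀ c : Fin n → F, c ∈ S ↔ ∃ q, toPoly c = skewMul σ q f)
    (a : Fin n → F) (ha : a ∈ dualSet S) :
    ∃ q' : ℕ →₀ F, (∀ j, d ≤ j → q' j = 0)
      ∧ ∀ t : Fin n, a t = (skewMul σ q' (skewRecip σ e h)) ↑t := by
  classical
  obtain ⟨hhat0, hhatsupp⟩ := hhat_facts σ (h := h) he1
  set hhat := skewRecip σ e h with hhat_def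
  set abar : ℕ → F := fun u => if hu : u < n then a ⟨u, hu⟩ else 0 with habar
  set q'fun : ℕ → F := fun u => if u < d then recQ σ hhat abar u else 0 with hq'fun
  have hsupp : ∀ u : ℕ, q'fun u ≠ 0 → u ∈ Finset.range d := by
    intro u hu
    rw [hq'fun] at hu
    simp only at hu
    by_cases hud : u < d
    · exact Finset.mem_range.mpr hud
    · rw [if_neg hud] at hu
      exact absurd rfl hu
  set q' : ℕ →₀ F := Finsupp.onFinset (Finset.range d) q'fun hsupp with hq'
  have hq'supp : ∀ j, d ≤ j → q' j = 0 := by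
    intro j hj
    show q'fun j = 0
    rw [hq'fun]
    simp only
    rw [if_neg (by omega)]
  have hq'val : ∀ u, u < d → q' u = recQ σ hhat abar u := by
    intro u hu
    show q'fun u = _
    rw [hq'fun]
    simp only
    rw [if_pos hu]
  have hmatch : ∀ u, u < d → (skewMul σ q' hhat) u = abar u := by
    intro u hu
    rw [skewMul_apply, Finset.sum_range_succ, Nat.sub_self, hhat0, map_one, mul_one]
    rw [hq'val u hu, recQ_eq]
    have hcongr : ∀ j ∈ Finset.range u, q' j * (σ ^ j) (hhat (u - j))
        = recQ σ hhat abar j * (σ ^ j) (hhat (u - j)) := by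
      intro j hj
      rw [Finset.mem_range] at hj
      rw [hq'val j (by omega)]
    rw [Finset.sum_congr rfl hcongr]
    ring
  have hYiS : ∀ i, i < e → (fun t : Fin n => (skewMul σ (Finsupp.single i 1) f) ↑t) ∈ S := by
    intro i hie
    rw [hS]
    refine ⟨Finsupp.single i 1, toPoly_coe _ ?_⟩
    intro c hc
    apply skewMul_support_bound σ (v := f) (du := i) (dv := d) ?_ hd0 c (by omega)
    intro i' hi'
    rw [Finsupp.single_apply, if_neg (by omega)]
  have hEa : ∀ i, i < e →
      ∑ t : Fin n, a t * (skewMul σ (Finsupp.single i 1) f) ↑t = 0 := by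
    intro i hie
    exact ha _ (hYiS i hie)
  set w : Fin n → F := fun t => (skewMul σ q' hhat) ↑t with hw
  have hEw : ∀ i, i < e →
      ∑ t : Fin n, w t * (skewMul σ (Finsupp.single i 1) f) ↑t = 0 := by
    intro i hie
    exact ORTH σ hn hde hd1 hd0 he0 hC1 S hS q' hq'supp _ (hYiS i hie)
  have hagree : ∀ t : Fin n, (t : ℕ) < d → a t = w t := by
    intro t ht
    rw [hw]
    simp only
    rw [hmatch ↑t ht, habar]
    simp only
    rw [dif_pos t.isLt]
  have := UNIQ σ hde hd1 hd0 a w hEa hEw hagree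
  exact ⟨q', hq'supp, fun t => congrFun this t⟩

end Component2



theorem core {n : ℕ} (hn : n ≠ 0) (lam : F) (hlam : lam = 1 ∨ lam = -1)
    (f h : ℕ →₀ F) (k : ℕ) (hk : ∀ j, k < j → h j = 0) (hmon : IsMonicPoly f)
    (hdiv : skewMul σ h f = Finsupp.single n 1 - Finsupp.single 0 lam)
    (S : Set (Fin n → F)) (hS : ∀ c : Fin n → F, c ∈ S ↔ ∃ q, toPoly c = skewMul σ q f) :
    dualSet S ⊆ S ↔ ∃ q, skewMul σ q (Finsupp.single n 1 - Finsupp.single 0 lam)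
      = skewMul σ (skewRecip σ k h) h := by
  classical
  obtain ⟨d, hd1, hd0⟩ := hmon
  obtain ⟨e, hde, he1, he0, hf0, h00⟩ := facts σ hn hlam hd1 hd0 hdiv
  have hC1 := C1 σ hn hlam hd1 hd0 hde he1 he0 hf0 hdiv
  have hek : e ≤ k := by
    by_contra hgt
    push_neg at hgt
    rw [hk e hgt] at he1
    exact one_ne_zero he1.symm
  have hshift := SHIFT σ (h := h) hek hk he0
  obtain ⟨hhat0, hhatsupp⟩ := hhat_facts σ (h := h) he1
  have hhne : h ≠ 0 := by
    intro hz
    rw [hz] at he1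
    exact one_ne_zero he1.symm
  by_cases hd : d = 0
  · subst hd
    have hfone : f = Finsupp.single 0 1 := by
      apply Finsupp.ext; intro t
      cases t with
      | zero => rw [hd1, Finsupp.single_eq_same]
      | succ t => rw [hd0 (t + 1) (by omega), Finsupp.single_apply, if_neg (by omega)]
    have hSall : ∀ c : Fin n → F, c ∈ S := fun c =>
      (hS c).mpr ⟨toPoly c, by rw [hfone, skewMul_one]⟩
    constructor
    · intro _
      have hhE : h = Finsupp.single n 1 - Finsupp.single 0 lam := by
        rw [← hdiv, hfone, skewMul_one]
      exact ⟨skewRecip σ k h, by rw [hhE]⟩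
    · intro _ a _
      exact hSall a
  · have hdpos : 0 < d := Nat.pos_of_ne_zero hd
    constructor
    · intro hsub
      have hmem : (fun t : Fin n => (skewRecip σ e h) ↑t) ∈ dualSet S := by
        intro b hb
        have hsupp1 : ∀ j, d ≤ j → (Finsupp.single 0 1 : ℕ →₀ F) j = 0 := by
          intro j hj
          rw [Finsupp.single_apply, if_neg (by omega)]
        have horth := ORTH σ hn hde hd1 hd0 he0 hC1 S hS (Finsupp.single 0 1) hsupp1 b hb
        rw [one_skewMul] at horth
        exact horth
      have hmemS := hsub hmem
      obtain ⟨g, hg⟩ := (hS _).mp hmemS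
      have hgpoly : toPoly (fun t : Fin n => (skewRecip σ e h) ↑t) = skewRecip σ e h :=
        toPoly_coe _ (fun j hj => hhatsupp j (by omega))
      rw [hgpoly] at hg
      refine ⟨skewMul σ (Finsupp.single (k - e) 1) g, ?_⟩
      rw [hshift]
      rw [skewMul_assoc σ (Finsupp.single (k - e) 1) (skewRecip σ e h) h, hg,
        skewMul_assoc σ g f h, hC1, ← skewMul_assoc]
    · rintro ⟨q, hq⟩ a ha
      rw [hshift, skewMul_assoc] at hq
      obtain ⟨q2, hq2⟩ := XCANCEL σ hn hlam (k - e) (skewMul σ (skewRecip σ e h) h) q hq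
      rw [← hC1, ← skewMul_assoc] at hq2
      have hhf : skewRecip σ e h = skewMul σ q2 f := skewMul_right_cancel σ hhne hq2
      obtain ⟨q', hq'supp, hq'⟩ := RECON σ hn hde hd1 hd0 he1 he0 hC1 S hS a ha
      rw [hS]
      refine ⟨skewMul σ q' q2, ?_⟩
      have hpoly : toPoly a = skewMul σ q' (skewRecip σ e h) := by
        have hbnd : ∀ j, n ≤ j → (skewMul σ q' (skewRecip σ e h)) j = 0 := by
          intro j hj
          apply skewMul_support_bound σ (du := d - 1) (dv := e) ?_ hhatsupp j (by omega)
          intro i hi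
          exact hq'supp i (by omega)
        rw [show a = fun t : Fin n => (skewMul σ q' (skewRecip σ e h)) ↑t from funext hq']
        exact toPoly_coe _ hbnd
      rw [hpoly, hhf, ← skewMul_assoc]


section Global

open Polynomial

variable (F : Type) [Field F]

lemma two_ne_zero_of_card {p m : ℕ} [Fintype F] (hp : p.Prime) (hodd : Odd p)
    (hF : Fintype.card F = p ^ m) : (2 : F) ≠ 0 := by
  haveI : CharP F (ringChar F) := ringChar.charP F
  obtain ⟨n', hq, hcard⟩ := FiniteField.card F (ringChar F)
  rw [hF] at hcard
  have hdvd : ringChar F ∣ p ^ m := by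
    rw [hcard]
    exact dvd_pow_self _ n'.ne_zero
  have hqp : ringChar F = p :=
    (Nat.prime_dvd_prime_iff_eq hq hp).mp (hq.dvd_of_dvd_pow hdvd)
  intro h2
  have h2' : ((2 : ℕ) : F) = 0 := by exact_mod_cast h2
  have := (CharP.cast_eq_zero_iff F (ringChar F) 2).mp h2'
  rw [hqp] at this
  have hple : p ≤ 2 := Nat.le_of_dvd (by norm_num) this
  have hp2 : p = 2 := by
    have := hp.two_le
    omega
  rw [hp2, Nat.odd_iff] at hodd
  norm_num at hodd

def phi (l : Fin 3) : Rq F →+* F :=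
  Ideal.Quotient.lift _ (Polynomial.evalRingHom (![0, 1, -1] l : F)) (by
    intro a hmem
    rw [Ideal.mem_span_singleton] at hmem
    obtain ⟨c, hc⟩ := hmem
    rw [hc, map_mul]
    have hz : Polynomial.evalRingHom (![0, 1, -1] l : F) ((X : Polynomial F) ^ 3 - X) = 0 := by
      fin_cases l <;> norm_num
    rw [hz, zero_mul])

lemma phi_mk (l : Fin 3) (P : Polynomial F) :
    phi F l (Ideal.Quotient.mk _ P) = P.eval (![0, 1, -1] l : F) :=
  Ideal.Quotient.lift_mk _ _ _

lemma phi_alg (l : Fin 3) (a : F) : phi F l (algebraMap F (Rq F) a) = a := by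
  rw [show algebraMap F (Rq F) a = Ideal.Quotient.mk _ (C a) from rfl, phi_mk, eval_C]

lemma phi_v (l : Fin 3) : phi F l (vR F) = (![0, 1, -1] l : F) := by
  rw [vR, phi_mk, eval_X]

lemma phi_eta (h2 : (2 : F) ≠ 0) (l j : Fin 3) :
    phi F l (eta F j) = if l = j then 1 else 0 := by
  have h12 : (2:F)⁻¹ * 2 = 1 := inv_mul_cancel₀ h2
  fin_cases l <;> fin_cases j <;>
    simp [_root_.eta, map_sub, map_add, map_mul, map_pow, map_one, phi_alg, phi_v] <;>
    ring_nf <;>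
    first
      | rfl
      | exact h12
      | skip

lemma inj3 (h2 : (2 : F) ≠ 0) (z : Rq F) (hz : ∀ l, phi F l z = 0) : z = 0 := by
  obtain ⟨P, rfl⟩ := Ideal.Quotient.mk_surjective z
  have h0 : P.IsRoot 0 := by
    have := hz 0
    rw [phi_mk] at this
    simpa using this
  have h1 : P.IsRoot 1 := by
    have := hz 1
    rw [phi_mk] at this
    simpa using this
  have hm1 : P.IsRoot (-1) := by
    have := hz 2
    rw [phi_mk] at this
    simpa using this
  rw [Ideal.Quotient.eq_zero_iff_mem, Ideal.mem_span_singleton]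
  have hd0 : (X - C (0:F)) ∣ P := dvd_iff_isRoot.mpr h0
  have hd1 : (X - C (1:F)) ∣ P := dvd_iff_isRoot.mpr h1
  have hdm : (X - C (-1:F)) ∣ P := dvd_iff_isRoot.mpr hm1
  have hu2 : IsUnit ((1:F) - (-1)) := by
    rw [show (1:F) - (-1) = 2 by ring]
    exact isUnit_iff_ne_zero.mpr h2
  have hco1 : IsCoprime (X - C (1:F)) (X - C (-1:F)) :=
    isCoprime_X_sub_C_of_isUnit_sub hu2
  have hco01 : IsCoprime (X - C (0:F)) (X - C (1:F)) :=
    isCoprime_X_sub_C_of_isUnit_sub (by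
      rw [show (0:F) - 1 = -1 by ring]
      exact isUnit_iff_ne_zero.mpr (neg_ne_zero.mpr one_ne_zero))
  have hco0m : IsCoprime (X - C (0:F)) (X - C (-1:F)) :=
    isCoprime_X_sub_C_of_isUnit_sub (by
      rw [show (0:F) - (-1) = 1 by ring]
      exact isUnit_one)
  have hda : (X - C (1:F)) * (X - C (-1:F)) ∣ P := hco1.mul_dvd hd1 hdm
  have hcob : IsCoprime (X - C (0:F)) ((X - C (1:F)) * (X - C (-1:F))) :=
    hco01.mul_right hco0m
  have hfull : (X - C (0:F)) * ((X - C (1:F)) * (X - C (-1:F))) ∣ P := hcob.mul_dvd hd0 hda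
  have heq : (X : Polynomial F) ^ 3 - X
      = (X - C (0:F)) * ((X - C (1:F)) * (X - C (-1:F))) := by
    rw [map_zero, map_one, map_neg, map_one]
    ring
  rw [heq]
  exact hfull

lemma reconstruct (h2 : (2 : F) ≠ 0) (r : Rq F) :
    ∑ j : Fin 3, eta F j * algebraMap F (Rq F) (phi F j r) = r := by
  rw [← sub_eq_zero]
  apply inj3 F h2
  intro l
  rw [map_sub, map_sum]
  have : ∀ j : Fin 3, phi F l (eta F j * algebraMap F (Rq F) (phi F j r))
      = (if l = j then 1 else 0) * phi F j r := by
    intro j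
    rw [map_mul, phi_eta F h2, phi_alg]
  rw [Finset.sum_congr rfl (fun j _ => this j)]
  rw [Finset.sum_eq_single l]
  · rw [if_pos rfl, one_mul, sub_self]
  · intro j _ hne
    rw [if_neg (fun hh => hne hh.symm), zero_mul]
  · intro hmem
    exact absurd (Finset.mem_univ l) hmem

end Global

end SkewAux

theorem stmt16 (p m n : ℕ) (hp : p.Prime) (hodd : Odd p) (hm : 0 < m) [NeZero n]
    (F : Type) [Field F] [Fintype F] (hF : Fintype.card F = p ^ m)
    (Θ : RingAut F) (σ : RingAut (Rq F))
    (hσ : ∀ a b c : F,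
      σ (algebraMap F (Rq F) a + algebraMap F (Rq F) b * vR F +
          algebraMap F (Rq F) c * vR F ^ 2) =
        algebraMap F (Rq F) (Θ a) + algebraMap F (Rq F) (Θ b) * vR F +
          algebraMap F (Rq F) (Θ c) * vR F ^ 2)
    (lam : Fin 3 → F) (hlam : ∀ i, lam i = 1 ∨ lam i = -1)
    (δ : Rq F) (hδ : δ = ∑ i, algebraMap F (Rq F) (lam i) * eta F i)
    (f h : Fin 3 → (ℕ →₀ F)) (k : Fin 3 → ℕ)
    (hk : ∀ i, ∀ j, k i < j → (h i) j = 0)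
    (hmon : ∀ i, IsMonicPoly (f i))
    (hdiv : ∀ i, skewMul Θ (h i) (f i) =
        Finsupp.single n 1 - Finsupp.single 0 (lam i))
    (A : Fin 3 → Submodule F (Fin n → F))
    (hA : ∀ i, ∀ c : Fin n → F, c ∈ A i ↔ ∃ q, toPoly c = skewMul Θ q (f i))
    (C : Submodule (Rq F) (Fin n → Rq F))
    (hC : ∀ c, c ∈ C ↔ ∃ y : Fin 3 → Fin n → F, (∀ i, y i ∈ A i) ∧
        c = fun t => ∑ j, eta F j * algebraMap F (Rq F) (y j t))
    (hconst : IsSkewConstacyclic σ δ (C : Set (Fin n → Rq F))) :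
    dualSet (C : Set (Fin n → Rq F)) ⊆ (C : Set (Fin n → Rq F)) ↔
      ∀ i, ∃ q : ℕ →₀ F,
        skewMul Θ q (Finsupp.single n 1 - Finsupp.single 0 (lam i)) =
          skewMul Θ (skewRecip Θ (k i) (h i)) (h i) := by
  classical
  have hn : n ≠ 0 := NeZero.ne n
  have h2 : (2 : F) ≠ 0 := SkewAux.two_ne_zero_of_card F hp hodd hF
  have hmemC : ∀ c : Fin n → Rq F, c ∈ C ↔ ∀ l, (fun t => SkewAux.phi F l (c t)) ∈ A l := by
    intro c
    constructor
    · intro hc l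
      obtain ⟨y, hy, hcy⟩ := (hC c).mp hc
      have hco : (fun t => SkewAux.phi F l (c t)) = y l := by
        funext t
        rw [hcy]
        simp only
        rw [map_sum]
        have hterm : ∀ j : Fin 3, SkewAux.phi F l (eta F j * algebraMap F (Rq F) (y j t))
            = (if l = j then 1 else 0) * y j t := fun j => by
          rw [map_mul, SkewAux.phi_eta F h2, SkewAux.phi_alg]
        rw [Finset.sum_congr rfl (fun j _ => hterm j), Finset.sum_eq_single l]
        · rw [if_pos rfl, one_mul]
        · intro j _ hne
          rw [if_neg (fun hh => hne hh.symm), zero_mul]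
        · intro hm'
          exact absurd (Finset.mem_univ l) hm'
      rw [hco]
      exact hy l
    · intro hl
      refine (hC c).mpr ⟨fun l t => SkewAux.phi F l (c t), hl, ?_⟩
      funext t
      exact (SkewAux.reconstruct F h2 (c t)).symm
  have h0A : ∀ j, (0 : Fin n → F) ∈ A j := fun j =>
    (hA j 0).mpr ⟨0, by rw [SkewAux.toPoly_zero, SkewAux.zero_skewMul]⟩
  have h0dual : ∀ j, (0 : Fin n → F) ∈ dualSet (A j : Set (Fin n → F)) := by
    intro j b _
    simp
  have hdualC : ∀ a : Fin n → Rq F, a ∈ dualSet (C : Set (Fin n → Rq F)) ↔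
      ∀ l, (fun t => SkewAux.phi F l (a t)) ∈ dualSet (A l : Set (Fin n → F)) := by
    intro a
    constructor
    · intro ha l x hx
      set b : Fin n → Rq F := fun t => eta F l * algebraMap F (Rq F) (x t) with hb
      have hbC : b ∈ C := by
        refine (hC b).mpr ⟨fun j => if j = l then x else 0, ?_, ?_⟩
        · intro j
          dsimp only
          by_cases hj : j = l
          · subst hj
            rw [if_pos rfl]
            exact hx
          · rw [if_neg hj]
            exact h0A j
        · funext t
          rw [hb]
          dsimp only
          rw [Finset.sum_eq_single l]
          · rw [if_pos rfl]
          · intro j _ hne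
            rw [if_neg hne, Pi.zero_apply, map_zero, mul_zero]
          · intro hm'
            exact absurd (Finset.mem_univ l) hm'
      have h0 := ha b hbC
      have hphi := congrArg (SkewAux.phi F l) h0
      rw [map_sum, map_zero] at hphi
      have hterm : ∀ t : Fin n, SkewAux.phi F l (a t * b t) = SkewAux.phi F l (a t) * x t := by
        intro t
        rw [hb]
        simp only
        rw [map_mul, map_mul, SkewAux.phi_eta F h2, if_pos rfl, SkewAux.phi_alg, one_mul]
      rw [Finset.sum_congr rfl (fun t _ => hterm t)] at hphi
      exact hphi
    · intro hl b hbC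
      have hyb := (hmemC b).mp hbC
      rw [← sub_eq_zero, sub_zero]
      apply SkewAux.inj3 F h2
      intro l
      rw [map_sum]
      have hterm : ∀ t : Fin n, SkewAux.phi F l (a t * b t)
          = SkewAux.phi F l (a t) * SkewAux.phi F l (b t) := fun t => map_mul _ _ _
      rw [Finset.sum_congr rfl (fun t _ => hterm t)]
      exact hl l (fun t => SkewAux.phi F l (b t)) (hyb l)
  have hred : dualSet (C : Set (Fin n → Rq F)) ⊆ (C : Set (Fin n → Rq F)) ↔
      ∀ l, dualSet (A l : Set (Fin n → F)) ⊆ (A l : Set (Fin n → F)) := by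
    constructor
    · intro hsub l x hx
      set a : Fin n → Rq F := fun t => eta F l * algebraMap F (Rq F) (x t) with ha
      have hxa : (fun t => SkewAux.phi F l (a t)) = x := by
        funext t
        rw [ha]
        simp only
        rw [map_mul, SkewAux.phi_eta F h2, if_pos rfl, SkewAux.phi_alg, one_mul]
      have hadual : a ∈ dualSet (C : Set (Fin n → Rq F)) := by
        rw [hdualC]
        intro l'
        by_cases hl' : l' = l
        · subst hl'
          rw [hxa]
          exact hx
        · have hz : (fun t => SkewAux.phi F l' (a t)) = 0 := by
            funext t
            rw [ha]
            simp only
            rw [map_mul, SkewAux.phi_eta F h2, if_neg hl', zero_mul, Pi.zero_apply]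
          rw [hz]
          exact h0dual l'
      have haC := hsub hadual
      have hmem := (hmemC a).mp haC l
      rw [hxa] at hmem
      exact hmem
    · intro hall a hadual
      have hcomp := (hdualC a).mp hadual
      exact (hmemC a).mpr fun l => hall l (hcomp l)
  rw [hred]
  apply forall_congr'
  intro i
  exact SkewAux.core Θ hn (lam i) (hlam i) (f i) (h i) (k i) (hk i) (hmon i) (hdiv i)
    (A i : Set (Fin n → F)) (fun c => hA i c)
end
end
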